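/- For the randomized Kaczmarz method, a single expected step contracts the error: if rows are selected with probability ‖a_i‖²/‖A‖_F², and x* solves Ax = b, then E‖x_{k+1} − x*‖² ≤ (1 − σ_min(A)²/‖A‖_F²)·‖x_k − x*‖², where σ_min(A) is the smallest singular value of A (assumed A has full column rank). -/

import Mathlib

/-- Expected one-step contraction of the randomized Kaczmarz method: with rows
selected with probability `‖a i‖²/‖A‖_F²` (where `‖A‖_F² = ∑ j, ‖a j‖²`), and
`σ` the smallest singular value of `A` (so that `‖Az‖² ≥ σ²‖z‖²` for all `z`,
`σ > 0` by full column rank), the expected squared error after one step satisfies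
`E‖x' - x*‖² ≤ (1 - σ²/‖A‖_F²)‖x - x*‖²`. -/
theorem randomized_kaczmarz_expected_contraction (m n : ℕ)
    (a : Fin m → EuclideanSpace ℝ (Fin n)) (ha : ∀ i, a i ≠ 0)
    (b : Fin m → ℝ) (σ : ℝ) (hσpos : 0 < σ)
    (hσ : ∀ z : EuclideanSpace ℝ (Fin n), σ^2 * ‖z‖^2 ≤ ∑ i, (inner ℝ (a i) z : ℝ)^2)
    (x xs : EuclideanSpace ℝ (Fin n))
    (hxs : ∀ i, (inner ℝ (a i) xs : ℝ) = b i) :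
    ∑ i, (‖a i‖^2 / ∑ j, ‖a j‖^2) *
        ‖x + ((b i - (inner ℝ (a i) x : ℝ)) / ‖a i‖^2) • a i - xs‖^2
      ≤ (1 - σ^2 / ∑ j, ‖a j‖^2) * ‖x - xs‖^2 := by
  set e : EuclideanSpace ℝ (Fin n) := x - xs with he
  set F : ℝ := ∑ j, ‖a j‖^2 with hF
  have hFnonneg : (0:ℝ) ≤ F := Finset.sum_nonneg fun j _ => sq_nonneg _
  by_cases hF0 : F = 0
  · have hempty : IsEmpty (Fin m) := by
      constructor
      intro i
      have h1 : ‖a i‖^2 ≤ F := by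
        rw [hF]
        exact Finset.single_le_sum (fun j _ => sq_nonneg ‖a j‖) (Finset.mem_univ i)
      have : ‖a i‖ = 0 := by nlinarith [sq_nonneg ‖a i‖]
      exact ha i (norm_eq_zero.mp this)
    rw [show (Finset.univ : Finset (Fin m)) = ∅ from Finset.univ_eq_empty]
    simp [hF0]
  have hFpos : 0 < F := lt_of_le_of_ne hFnonneg (Ne.symm hF0)
  have key : ∀ i, ‖x + ((b i - (inner ℝ (a i) x : ℝ)) / ‖a i‖^2) • a i - xs‖^2
      = ‖e‖^2 - (inner ℝ (a i) e : ℝ)^2 / ‖a i‖^2 := by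
    intro i
    have hai : ‖a i‖ ≠ 0 := norm_ne_zero_iff.mpr (ha i)
    have hai2 : (‖a i‖:ℝ)^2 ≠ 0 := pow_ne_zero _ hai
    set t : ℝ := inner ℝ (a i) e with ht
    have hb : b i - (inner ℝ (a i) x : ℝ) = -t := by
      rw [← hxs i, ht, he, inner_sub_right]; ring
    have hvec : x + ((b i - (inner ℝ (a i) x : ℝ)) / ‖a i‖^2) • a i - xs
        = e + ((-t) / ‖a i‖^2) • a i := by
      rw [hb, he]; abel
    rw [hvec, norm_add_sq_real]
    rw [real_inner_smul_right, norm_smul, mul_pow]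
    have : (inner ℝ e (a i) : ℝ) = t := by rw [ht, real_inner_comm]
    rw [this]
    rw [show ‖(-t) / ‖a i‖^2‖ = |(-t) / ‖a i‖^2| from rfl]
    rw [sq_abs]
    field_simp
    ring
  have hterm : ∀ i : Fin m, (‖a i‖^2 / F) *
      ‖x + ((b i - (inner ℝ (a i) x : ℝ)) / ‖a i‖^2) • a i - xs‖^2
      = ‖a i‖^2 / F * ‖e‖^2 - (inner ℝ (a i) e : ℝ)^2 / F := by
    intro i
    have hai2 : (‖a i‖:ℝ)^2 ≠ 0 := pow_ne_zero _ (norm_ne_zero_iff.mpr (ha i))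
    rw [key i]
    field_simp
    have hc : ‖a i‖^2 * ((inner ℝ (a i) e : ℝ)^2 / ‖a i‖^2) = (inner ℝ (a i) e : ℝ)^2 := by
      rw [← mul_div_assoc]; exact mul_div_cancel_left₀ _ hai2
    rw [mul_sub, hc]
  calc ∑ i, (‖a i‖^2 / F) *
        ‖x + ((b i - (inner ℝ (a i) x : ℝ)) / ‖a i‖^2) • a i - xs‖^2
      = ∑ i, (‖a i‖^2 / F * ‖e‖^2 - (inner ℝ (a i) e : ℝ)^2 / F) := by
        exact Finset.sum_congr rfl fun i _ => hterm i
    _ = (∑ i, ‖a i‖^2) / F * ‖e‖^2 - (∑ i, (inner ℝ (a i) e : ℝ)^2) / F := by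
        rw [Finset.sum_sub_distrib, ← Finset.sum_div, ← Finset.sum_mul,
          ← Finset.sum_div]
    _ = ‖e‖^2 - (∑ i, (inner ℝ (a i) e : ℝ)^2) / F := by
        rw [← hF, div_self (ne_of_gt hFpos), one_mul]
    _ ≤ ‖e‖^2 - σ^2 * ‖e‖^2 / F := by
        have := hσ e
        have h2 : σ^2 * ‖e‖^2 / F ≤ (∑ i, (inner ℝ (a i) e : ℝ)^2) / F := by
          gcongr
        linarith
    _ = (1 - σ^2 / F) * ‖e‖^2 := by ring
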